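/- Let C ∈ V with C² < 0 and C 0 > 0. Then every β ∈ Pos̄ with β·C ≤ 0 can be written as β = γ + t•C with γ ∈ Pos̄, γ·C = 0, and t ≥ 0. Equivalently, C^{≤0} ∩ Pos̄ ⊆ (C^⊥ ∩ Pos̄) + R(C). -/

import Mathlib

/-- The Minkowski bilinear form on `Fin ρ → ℝ`:
`B(x,y) = x 0 * y 0 − ∑_{i ≠ 0} x i * y i`, of signature `(1, ρ−1)`. -/
noncomputable def Bform {ρ : ℕ} [NeZero ρ] (x y : Fin ρ → ℝ) : ℝ :=
  x 0 * y 0 - ∑ i ∈ Finset.univ.erase (0 : Fin ρ), x i * y i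

/-- The closed positive cone `Pos̄ = {x : x² ≥ 0 ∧ x 0 ≥ 0}`. -/
def PosBar (ρ : ℕ) [NeZero ρ] : Set (Fin ρ → ℝ) :=
  {x | 0 ≤ Bform x x ∧ 0 ≤ x 0}

/-- The open positive cone `Pos = {x : x² > 0 ∧ x 0 > 0}`. -/
def PosOpen (ρ : ℕ) [NeZero ρ] : Set (Fin ρ → ℝ) :=
  {x | 0 < Bform x x ∧ 0 < x 0}

/-- The ray `R(v) = {t • v : t ≥ 0}` spanned by `v`. -/
def Ray {ρ : ℕ} (v : Fin ρ → ℝ) : Set (Fin ρ → ℝ) :=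
  {w | ∃ t : ℝ, 0 ≤ t ∧ w = t • v}

lemma Bform_comm {ρ : ℕ} [NeZero ρ] (x y : Fin ρ → ℝ) : Bform x y = Bform y x := by
  simp [Bform, mul_comm]

lemma Bform_sub_smul {ρ : ℕ} [NeZero ρ] (x y z : Fin ρ → ℝ) (t : ℝ) :
    Bform (x - t • y) z = Bform x z - t * Bform y z := by
  simp only [Bform, Pi.sub_apply, Pi.smul_apply, smul_eq_mul, sub_mul, mul_assoc,
    Finset.sum_sub_distrib]
  rw [mul_sub, Finset.mul_sum]
  ring

/-- Reverse Cauchy-Schwarz: the product of two vectors in the closed cone is nonnegative. -/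
lemma Bform_nonneg_of_cone {ρ : ℕ} [NeZero ρ] (x y : Fin ρ → ℝ)
    (hx2 : 0 ≤ Bform x x) (hx0 : 0 ≤ x 0) (hy2 : 0 ≤ Bform y y) (hy0 : 0 ≤ y 0) :
    0 ≤ Bform x y := by
  set s := Finset.univ.erase (0 : Fin ρ)
  have hA : ∑ i ∈ s, x i ^ 2 ≤ x 0 ^ 2 := by
    have := hx2; simp only [Bform] at this
    have : ∑ i ∈ s, x i * x i ≤ x 0 * x 0 := by linarith
    simpa [sq] using this
  have hB : ∑ i ∈ s, y i ^ 2 ≤ y 0 ^ 2 := by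
    have := hy2; simp only [Bform] at this
    have : ∑ i ∈ s, y i * y i ≤ y 0 * y 0 := by linarith
    simpa [sq] using this
  have hCS := Finset.sum_mul_sq_le_sq_mul_sq s x y
  have hAnn : (0:ℝ) ≤ ∑ i ∈ s, x i ^ 2 := Finset.sum_nonneg fun i _ => sq_nonneg _
  have hBnn : (0:ℝ) ≤ ∑ i ∈ s, y i ^ 2 := Finset.sum_nonneg fun i _ => sq_nonneg _
  have hS : ∑ i ∈ s, x i * y i ≤ x 0 * y 0 := by
    nlinarith [sq_nonneg (∑ i ∈ s, x i * y i), mul_nonneg hx0 hy0,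
      sq_nonneg (x 0 * y 0 - ∑ i ∈ s, x i * y i), sq_nonneg (x 0 * y 0 + ∑ i ∈ s, x i * y i)]
  simp only [Bform]
  linarith

/-- Claim (5.16): `C^{≤0} ∩ Pos̄ ⊆ (C^⊥ ∩ Pos̄) + R(C)` whenever `C² < 0`, `C 0 > 0`. -/
theorem stmt14 {ρ : ℕ} [NeZero ρ] (hρ : 1 ≤ ρ) (C : Fin ρ → ℝ)
    (hC2 : Bform C C < 0) (hC0 : 0 < C 0)
    (β : Fin ρ → ℝ) (hβ : β ∈ PosBar ρ) (hβC : Bform β C ≤ 0) :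
    ∃ γ ∈ PosBar ρ, Bform γ C = 0 ∧ ∃ t : ℝ, 0 ≤ t ∧ β = γ + t • C := by
  obtain ⟨hβ2, hβ0⟩ := hβ
  have hC2ne : Bform C C ≠ 0 := ne_of_lt hC2
  set t : ℝ := Bform β C / Bform C C with ht_def
  have ht : 0 ≤ t := by
    rw [ht_def, ← neg_div_neg_eq]
    exact div_nonneg (by linarith) (by linarith)
  set γ : Fin ρ → ℝ := β - t • C with hγ_def
  have hγC : Bform γ C = 0 := by
    rw [hγ_def, Bform_sub_smul, ht_def]
    field_simp
    ring
  have hCγ : Bform C γ = 0 := by rw [Bform_comm]; exact hγC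
  have hβγ : Bform β γ = Bform γ γ := by
    have : Bform γ γ = Bform β γ - t * Bform C γ := by rw [hγ_def, Bform_sub_smul]
    rw [this, hCγ]; ring
  have hγβ : Bform γ β = Bform β β - t * Bform β C := by
    rw [hγ_def, Bform_sub_smul, Bform_comm C β]
  have hγ2 : 0 ≤ Bform γ γ := by
    rw [← hβγ, Bform_comm, hγβ]
    nlinarith
  have hγ0 : 0 ≤ γ 0 := by
    by_contra h
    push_neg at h
    -- -γ is in the closed cone
    have hneg2 : 0 ≤ Bform (-γ) (-γ) := by
      have : Bform (-γ) (-γ) = Bform γ γ := by simp [Bform]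
      linarith
    have hneg0 : 0 ≤ (-γ) 0 := by simp; linarith
    have := Bform_nonneg_of_cone β (-γ) hβ2 hβ0 hneg2 hneg0
    have hbn : Bform β (-γ) = -Bform β γ := by
      simp [Bform, Finset.sum_neg_distrib, mul_comm]; ring
    have hβγ0 : Bform β γ ≤ 0 := by linarith [hbn ▸ this]
    have hγγ0 : Bform γ γ = 0 := le_antisymm (hβγ ▸ hβγ0) hγ2
    -- then β² = t * (β·C) ≤ 0, forcing t = 0 and γ = β
    have hββ : Bform β β = t * Bform β C := by
      have := hγβ
      rw [Bform_comm γ β, hβγ, hγγ0] at this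
      linarith
    have htβC : t * Bform β C = 0 := by
      have h1 : t * Bform β C ≤ 0 := mul_nonpos_of_nonneg_of_nonpos ht hβC
      linarith [hββ ▸ hβ2]
    have ht0 : t = 0 := by
      rcases mul_eq_zero.mp htβC with h' | h'
      · exact h'
      · rw [ht_def, h', zero_div]
    have : γ = β := by rw [hγ_def, ht0]; simp
    rw [this] at h
    linarith
  refine ⟨γ, ⟨hγ2, hγ0⟩, hγC, t, ht, ?_⟩
  rw [hγ_def]; abel
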